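/- arXiv:1610.09124 — 3 statements merged into one kernel-verified Lean document; each statement's English description precedes it below -/
import Mathlib

section
/- Let λ and μ be probability measures on ℝ with finite first moments. Then λ ≺ μ in convex order if and only if u_μ(x) ≤ u_λ(x) for all x ∈ ℝ and ∫y λ(dy) = ∫y μ(dy), where u_ν(x) = -∫|y-x| ν(dy). -/
open MeasureTheory Set

noncomputable def subgrad (c : ℝ → ℝ) (t : ℝ) : ℝ :=
  sInf ((fun u => (c u - c t) / (u - t)) '' Ioi t)

variable {c : ℝ → ℝ}

lemma subgrad_bddBelow (hc : ConvexOn ℝ univ c) (t : ℝ) :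
    BddBelow ((fun u => (c u - c t) / (u - t)) '' Ioi t) := by
  refine ⟨(c t - c (t - 1)) / (t - (t - 1)), ?_⟩
  rintro _ ⟨u, hu, rfl⟩
  exact hc.slope_mono_adjacent (mem_univ _) (mem_univ _) (by linarith) hu

lemma subgrad_le_slope (hc : ConvexOn ℝ univ c) {t u : ℝ} (h : t < u) :
    subgrad c t ≤ (c u - c t) / (u - t) :=
  csInf_le (subgrad_bddBelow hc t) ⟨u, h, rfl⟩

lemma slope_le_subgrad (hc : ConvexOn ℝ univ c) {y t : ℝ} (h : y < t) :
    (c t - c y) / (t - y) ≤ subgrad c t := by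
  refine le_csInf ⟨(c (t + 1) - c t) / (t + 1 - t), ⟨t + 1, by simp, rfl⟩⟩ ?_
  rintro _ ⟨u, hu, rfl⟩
  exact hc.slope_mono_adjacent (mem_univ _) (mem_univ _) h hu

lemma subgrad_sub (hc : ConvexOn ℝ univ c) (t y : ℝ) :
    c t + subgrad c t * (y - t) ≤ c y := by
  rcases lt_trichotomy y t with h | h | h
  · have h1 := slope_le_subgrad hc h
    rw [div_le_iff₀ (by linarith)] at h1
    nlinarith
  · subst h; simp
  · have h1 := subgrad_le_slope hc h
    rw [le_div_iff₀ (by linarith)] at h1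
    linarith

lemma subgrad_mono (hc : ConvexOn ℝ univ c) : Monotone (subgrad c) := by
  intro s t h
  rcases eq_or_lt_of_le h with rfl | h
  · exact le_rfl
  · exact le_trans (subgrad_le_slope hc h) (slope_le_subgrad hc h)

noncomputable def tanLine (c d : ℝ → ℝ) (s y : ℝ) : ℝ := c s + d s * (y - s)

noncomputable def pwl (c d : ℝ → ℝ) (t : ℕ → ℝ) (N : ℕ) (y : ℝ) : ℝ :=
  tanLine c d (t 0) y +
    ∑ i ∈ Finset.range N, max (tanLine c d (t (i + 1)) y - tanLine c d (t i) y) 0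

section pwl

variable {d : ℝ → ℝ} {t : ℕ → ℝ}

lemma tanLine_ge (hc : ConvexOn ℝ univ c) (j : ℕ) :
    ∀ {N : ℕ}, j ≤ N → ∀ y, tanLine c (subgrad c) (t j) y ≤ pwl c (subgrad c) t N y := by
  intro N hj y
  have h1 : ∑ i ∈ Finset.range j,
      (tanLine c (subgrad c) (t (i + 1)) y - tanLine c (subgrad c) (t i) y) ≤
      ∑ i ∈ Finset.range N, max (tanLine c (subgrad c) (t (i + 1)) y
        - tanLine c (subgrad c) (t i) y) 0 := by
    refine le_trans (Finset.sum_le_sum fun i _ => le_max_left _ 0) ?_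
    exact Finset.sum_le_sum_of_subset_of_nonneg (Finset.range_subset_range.2 hj)
      (fun i _ _ => le_max_right _ 0)
  rw [Finset.sum_range_sub (fun i => tanLine c (subgrad c) (t i) y)] at h1
  unfold pwl
  linarith

lemma diff_nonneg_of_ge (hc : ConvexOn ℝ univ c) (ht : Monotone t) (i : ℕ) {y : ℝ}
    (hy : t (i + 1) ≤ y) :
    0 ≤ tanLine c (subgrad c) (t (i + 1)) y - tanLine c (subgrad c) (t i) y := by
  have h1 := subgrad_sub hc (t i) (t (i + 1))
  have h2 : subgrad c (t i) ≤ subgrad c (t (i + 1)) :=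
    subgrad_mono hc (ht (Nat.le_succ i))
  unfold tanLine
  nlinarith [mul_nonneg (sub_nonneg.2 h2) (sub_nonneg.2 hy)]

lemma diff_nonpos_of_le (hc : ConvexOn ℝ univ c) (ht : Monotone t) (i : ℕ) {y : ℝ}
    (hy : y ≤ t i) :
    tanLine c (subgrad c) (t (i + 1)) y - tanLine c (subgrad c) (t i) y ≤ 0 := by
  have h1 := subgrad_sub hc (t (i + 1)) (t i)
  have h2 : subgrad c (t i) ≤ subgrad c (t (i + 1)) :=
    subgrad_mono hc (ht (Nat.le_succ i))
  unfold tanLine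
  nlinarith [mul_nonneg (sub_nonneg.2 h2) (sub_nonneg.2 hy)]

lemma pwl_eq_of_ge (hc : ConvexOn ℝ univ c) (ht : Monotone t) (N : ℕ) {y : ℝ}
    (hy : t N ≤ y) :
    pwl c (subgrad c) t N y = tanLine c (subgrad c) (t N) y := by
  unfold pwl
  rw [Finset.sum_congr rfl (fun i hi => ?_), Finset.sum_range_sub
    (fun i => tanLine c (subgrad c) (t i) y)]
  · ring
  · refine max_eq_left (diff_nonneg_of_ge hc ht i ?_)
    exact le_trans (ht (Nat.succ_le_of_lt (Finset.mem_range.1 hi))) hy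

lemma pwl_le (hc : ConvexOn ℝ univ c) (ht : Monotone t) :
    ∀ (N : ℕ) (y : ℝ), pwl c (subgrad c) t N y ≤ c y := by
  intro N
  induction N with
  | zero => intro y; simpa [pwl, tanLine] using subgrad_sub hc (t 0) y
  | succ N ih =>
    intro y
    have hstep : pwl c (subgrad c) t (N + 1) y = pwl c (subgrad c) t N y +
        max (tanLine c (subgrad c) (t (N + 1)) y - tanLine c (subgrad c) (t N) y) 0 := by
      unfold pwl
      rw [Finset.sum_range_succ]; ring
    by_cases hΔ : tanLine c (subgrad c) (t (N + 1)) y - tanLine c (subgrad c) (t N) y ≤ 0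
    · rw [hstep, max_eq_right hΔ]
      simpa using ih y
    · push_neg at hΔ
      have hty : t N ≤ y := by
        by_contra hcon
        push_neg at hcon
        exact absurd (diff_nonpos_of_le hc ht N hcon.le) (by linarith)
      rw [hstep, max_eq_left hΔ.le, pwl_eq_of_ge hc ht N hty]
      have := subgrad_sub hc (t (N + 1)) y
      unfold tanLine at *
      linarith

end pwl

/-- for probability measures `λ`, `μ` on `ℝ` with finite first moments,
`λ ≺ μ` in convex order if and only if `u_μ ≤ u_λ` pointwise and the means agree,
where `u_ν(x) = -∫ |y - x| ν(dy)`. -/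
theorem convex_order_iff_potential_le_and_mean_eq
    (lam mu : Measure ℝ) [IsProbabilityMeasure lam] [IsProbabilityMeasure mu]
    (hlam : Integrable id lam) (hmu : Integrable id mu) :
    (∀ c : ℝ → ℝ, ConvexOn ℝ Set.univ c →
        Integrable c lam → Integrable c mu →
        ∫ x, c x ∂lam ≤ ∫ x, c x ∂mu)
      ↔ ((∀ x : ℝ, -(∫ y, |y - x| ∂mu) ≤ -(∫ y, |y - x| ∂lam)) ∧
          ∫ y, y ∂lam = ∫ y, y ∂mu) := by
  constructor
  · intro h
    constructor
    · intro x
      have hconv : ConvexOn ℝ univ (fun y => |y - x|) := by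
        refine ⟨convex_univ, fun a _ b _ p q hp hq hpq => ?_⟩
        simp only [smul_eq_mul]
        calc |p * a + q * b - x| = |p * (a - x) + q * (b - x)| := by
              congr 1; linear_combination x * hpq
          _ ≤ |p * (a - x)| + |q * (b - x)| := abs_add_le _ _
          _ = p * |a - x| + q * |b - x| := by
              rw [abs_mul, abs_mul, abs_of_nonneg hp, abs_of_nonneg hq]
      have hil : Integrable (fun y => |y - x|) lam := by
        simpa using (hlam.sub (integrable_const x)).abs
      have him : Integrable (fun y => |y - x|) mu := by
        simpa using (hmu.sub (integrable_const x)).abs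
      have := h _ hconv hil him
      linarith
    · have h1 := h id (convexOn_id convex_univ) hlam hmu
      have h2 := h (fun y => -y)
        ⟨convex_univ, fun a _ b _ p q _ _ _ => by
          simp only [smul_eq_mul]; exact le_of_eq (by ring)⟩
        hlam.neg hmu.neg
      rw [integral_neg, integral_neg] at h2
      simp only [id_eq] at h1
      linarith
  · rintro ⟨hpot, hmean⟩ c hc hcl hcm
    have hpot' : ∀ x : ℝ, ∫ y, |y - x| ∂lam ≤ ∫ y, |y - x| ∂mu := fun x => by
      have := hpot x; linarith
    -- integral of an affine function against a probability measure
    have haff : ∀ (a b : ℝ) (ν : Measure ℝ) [IsProbabilityMeasure ν], Integrable id ν →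
        ∫ y, (a * y + b) ∂ν = a * (∫ y, y ∂ν) + b := by
      intro a b ν _ hν
      rw [integral_add (by simpa using hν.const_mul a) (integrable_const b),
        integral_const]
      simp only [smul_eq_mul, measure_univ, probReal_univ, ENNReal.toReal_one, one_mul]
      rw [integral_const_mul a (fun y => y)]
    have hmax : ∀ z : ℝ, max z 0 = (z + |z|) / 2 := by
      intro z
      rcases le_or_gt 0 z with hz | hz
      · rw [max_eq_left hz, abs_of_nonneg hz]; ring
      · rw [max_eq_right hz.le, abs_of_neg hz]; ring
    have hint : ∀ (a b : ℝ) (ν : Measure ℝ) [IsProbabilityMeasure ν], Integrable id ν →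
        Integrable (fun y => max (a * y + b) 0) ν := by
      intro a b ν _ hν
      have h0 : Integrable (fun y => a * y) ν := by simpa using hν.const_mul a
      have h1 : Integrable (fun y => a * y + b) ν := h0.add (integrable_const b)
      have : (fun y => max (a * y + b) 0) = fun y => ((a * y + b) + |a * y + b|) / 2 :=
        funext fun y => hmax _
      rw [this]
      exact (h1.add h1.abs).div_const 2
    -- the hockey-stick inequality
    have hkey : ∀ (a b : ℝ) (ν : Measure ℝ) [IsProbabilityMeasure ν], Integrable id ν →
        ∫ y, max (a * y + b) 0 ∂ν
          = (a * (∫ y, y ∂ν) + b + ∫ y, |a * y + b| ∂ν) / 2 := by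
      intro a b ν _ hν
      have h0 : Integrable (fun y => a * y) ν := by simpa using hν.const_mul a
      have h1 : Integrable (fun y => a * y + b) ν := h0.add (integrable_const b)
      calc ∫ y, max (a * y + b) 0 ∂ν
          = ∫ y, ((a * y + b) + |a * y + b|) / 2 ∂ν := by simp_rw [hmax]
        _ = ((∫ y, (a * y + b) ∂ν) + ∫ y, |a * y + b| ∂ν) / 2 := by
            rw [integral_div, integral_add h1 h1.abs]
        _ = (a * (∫ y, y ∂ν) + b + ∫ y, |a * y + b| ∂ν) / 2 := by
            rw [haff a b ν hν]
    have habs : ∀ a b : ℝ, ∫ y, |a * y + b| ∂lam ≤ ∫ y, |a * y + b| ∂mu := by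
      intro a b
      rcases eq_or_ne a 0 with rfl | ha
      · simp
      · have hfac : ∀ y : ℝ, |a * y + b| = |a| * |y - (-b / a)| := by
          intro y
          rw [← abs_mul]
          congr 1
          field_simp
          ring
        simp_rw [hfac]
        rw [integral_const_mul, integral_const_mul]
        exact mul_le_mul_of_nonneg_left (hpot' _) (abs_nonneg a)
    have hockey : ∀ a b : ℝ,
        ∫ y, max (a * y + b) 0 ∂lam ≤ ∫ y, max (a * y + b) 0 ∂mu := by
      intro a b
      rw [hkey a b lam hlam, hkey a b mu hmu, hmean]
      have := habs a b
      linarith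
    -- set up the approximation scheme
    set t : ℕ → ℕ → ℝ := fun n i => -(n + 1 : ℝ) + i / (n + 1) with htdef
    clear_value t
    have htmono : ∀ n, Monotone (t n) := by
      intro n i j hij
      simp only [htdef]
      have h1 : (i : ℝ) / (n + 1) ≤ (j : ℝ) / (n + 1) := by
        gcongr <;> exact_mod_cast hij
      linarith
    set N : ℕ → ℕ := fun n => 2 * (n + 1) ^ 2 with hN
    set g : ℕ → ℝ → ℝ := fun n y => pwl c (subgrad c) (t n) (N n) y with hg
    clear_value g
    clear_value N
    have hdmono : Monotone (subgrad c) := subgrad_mono hc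
    -- the integral inequality for each approximant
    have hineq : ∀ n, ∫ y, g n y ∂lam ≤ ∫ y, g n y ∂mu := by
      intro n
      set A : ℕ → ℝ := fun i => subgrad c (t n (i + 1)) - subgrad c (t n i) with hA
      set B : ℕ → ℝ := fun i =>
        (c (t n (i + 1)) - subgrad c (t n (i + 1)) * t n (i + 1))
          - (c (t n i) - subgrad c (t n i) * t n i) with hB
      set a0 : ℝ := subgrad c (t n 0) with ha0
      set b0 : ℝ := c (t n 0) - subgrad c (t n 0) * t n 0 with hb0
      clear_value A B a0 b0
      have hgrep : g n = fun y =>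
          (a0 * y + b0) + ∑ i ∈ Finset.range (N n), max (A i * y + B i) 0 := by
        funext y
        simp only [hg, pwl, tanLine, hA, hB, ha0, hb0]
        congr 1
        · ring
        · exact Finset.sum_congr rfl fun i _ => by congr 1; ring
      have haffint : ∀ (ν : Measure ℝ) [IsProbabilityMeasure ν], Integrable id ν →
          Integrable (fun y => a0 * y + b0) ν := by
        intro ν _ hν
        have h0 : Integrable (fun y => a0 * y) ν := by simpa using hν.const_mul a0
        exact h0.add (integrable_const b0)
      rw [hgrep,
        integral_add (haffint lam hlam)
          (integrable_finset_sum _ fun i _ => hint (A i) (B i) lam hlam),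
        integral_add (haffint mu hmu)
          (integrable_finset_sum _ fun i _ => hint (A i) (B i) mu hmu),
        integral_finset_sum _ (fun i _ => hint (A i) (B i) lam hlam),
        integral_finset_sum _ (fun i _ => hint (A i) (B i) mu hmu),
        haff a0 b0 lam hlam, haff a0 b0 mu hmu, hmean]
      have hsum := Finset.sum_le_sum
        (f := fun i => ∫ y, max (A i * y + B i) 0 ∂lam)
        (g := fun i => ∫ y, max (A i * y + B i) 0 ∂mu)
        (s := Finset.range (N n)) (fun i _ => hockey (A i) (B i))
      linarith
    -- the approximants are below c
    have hgle : ∀ n y, g n y ≤ c y := by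
      intro n y
      simp only [hg]
      exact pwl_le hc (htmono n) (N n) y
    -- the approximants are above a fixed affine function
    have hgge : ∀ n y, c 0 + subgrad c 0 * y ≤ g n y := by
      intro n y
      have ht0 : t n ((n + 1) ^ 2) = 0 := by
        simp only [htdef]
        push_cast
        have hn : ((n : ℝ) + 1) ≠ 0 := by positivity
        field_simp
        ring
      have hj : (n + 1) ^ 2 ≤ N n := by
        simp only [hN]
        nlinarith [Nat.zero_le ((n + 1) ^ 2)]
      have h1 := tanLine_ge (t := t n) hc ((n + 1) ^ 2) hj y
      rw [ht0] at h1
      simp only [hg]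
      unfold tanLine at h1
      simpa using h1
    -- pointwise convergence
    have hconv : ∀ y : ℝ, Filter.Tendsto (fun n => g n y) Filter.atTop (nhds (c y)) := by
      intro y
      have hK0 : 0 ≤ subgrad c y - subgrad c (y - 1) :=
        sub_nonneg.2 (hdmono (by linarith))
      have hlow : ∀ᶠ n in Filter.atTop,
          c y - (subgrad c y - subgrad c (y - 1)) / (n + 1) ≤ g n y := by
        rw [Filter.eventually_atTop]
        refine ⟨⌈|y|⌉₊, fun n hn => ?_⟩
        have hm0 : (0 : ℝ) < (n : ℝ) + 1 := by positivity
        have hym : |y| < (n : ℝ) + 1 := by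
          calc |y| ≤ (⌈|y|⌉₊ : ℝ) := Nat.le_ceil _
            _ ≤ (n : ℝ) := Nat.cast_le.2 hn
            _ < (n : ℝ) + 1 := by linarith
        have hy1 : -((n : ℝ) + 1) < y := by
          have := (abs_lt.1 hym).1; linarith
        have hy2 : y < (n : ℝ) + 1 := (abs_lt.1 hym).2
        have hpos : 0 ≤ (y + ((n : ℝ) + 1)) * ((n : ℝ) + 1) := by nlinarith
        set i : ℕ := ⌊(y + ((n : ℝ) + 1)) * ((n : ℝ) + 1)⌋₊ with hidef
        clear_value i
        have h1 : (i : ℝ) ≤ (y + ((n : ℝ) + 1)) * ((n : ℝ) + 1) := hidef ▸ Nat.floor_le hpos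
        have h2 : (y + ((n : ℝ) + 1)) * ((n : ℝ) + 1) < (i : ℝ) + 1 :=
          hidef ▸ Nat.lt_floor_add_one _
        have hiN : i ≤ N n := by
          have hr : (i : ℝ) ≤ ((N n : ℕ) : ℝ) := by
            simp only [hN]
            push_cast
            nlinarith
          exact_mod_cast hr
        have hts : t n i = -((n : ℝ) + 1) + (i : ℝ) / ((n : ℝ) + 1) := by
          simp [htdef]
        have htle : t n i ≤ y := by
          rw [hts]
          have : (i : ℝ) / ((n : ℝ) + 1) ≤ y + ((n : ℝ) + 1) := by
            rw [div_le_iff₀ hm0]; exact h1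
          linarith
        have htgt : y - 1 / ((n : ℝ) + 1) < t n i := by
          rw [hts]
          have h3 : y + ((n : ℝ) + 1) < ((i : ℝ) + 1) / ((n : ℝ) + 1) := by
            rw [lt_div_iff₀ hm0]; exact h2
          have h4 : ((i : ℝ) + 1) / ((n : ℝ) + 1)
              = (i : ℝ) / ((n : ℝ) + 1) + 1 / ((n : ℝ) + 1) := by ring
          linarith
        have hm1 : 1 / ((n : ℝ) + 1) ≤ 1 := by
          rw [div_le_one hm0]; linarith
        have hd1 : subgrad c (y - 1) ≤ subgrad c (t n i) :=
          hdmono (le_trans (by linarith : y - 1 ≤ y - 1 / ((n : ℝ) + 1)) htgt.le)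
        have hd2 : subgrad c (t n i) ≤ subgrad c y := hdmono htle
        have hsub1 := subgrad_sub hc y (t n i)
        have hprod : (subgrad c y - subgrad c (t n i)) * (y - t n i)
            ≤ (subgrad c y - subgrad c (y - 1)) * (1 / ((n : ℝ) + 1)) := by
          apply mul_le_mul (by linarith) (by linarith) (by linarith) hK0
        have hAg := tanLine_ge (t := t n) hc i hiN y
        unfold tanLine at hAg
        have hexp : (subgrad c y - subgrad c (t n i)) * (y - t n i)
            = -(subgrad c y * (t n i - y)) - subgrad c (t n i) * (y - t n i) := by
          ring
        have hfin : c y - (subgrad c y - subgrad c (y - 1)) * (1 / ((n : ℝ) + 1))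
            ≤ c (t n i) + subgrad c (t n i) * (y - t n i) := by
          linarith [hsub1, hprod, hexp]
        have hdiv : (subgrad c y - subgrad c (y - 1)) * (1 / ((n : ℝ) + 1))
            = (subgrad c y - subgrad c (y - 1)) / ((n : ℝ) + 1) := by ring
        simp only [hg]
        linarith
      have hlo_t : Filter.Tendsto
          (fun n : ℕ => c y - (subgrad c y - subgrad c (y - 1)) / ((n : ℝ) + 1))
          Filter.atTop (nhds (c y)) := by
        have h0 : Filter.Tendsto
            (fun n : ℕ => (subgrad c y - subgrad c (y - 1)) / ((n : ℝ) + 1))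
            Filter.atTop (nhds 0) := by
          have h0' := (tendsto_const_div_atTop_nhds_zero_nat
            (subgrad c y - subgrad c (y - 1))).comp (Filter.tendsto_add_atTop_nat 1)
          refine Filter.Tendsto.congr (fun n => ?_) h0'
          simp only [Function.comp]
          push_cast
          ring
        simpa using tendsto_const_nhds.sub h0
      exact tendsto_of_tendsto_of_tendsto_of_le_of_le' hlo_t tendsto_const_nhds hlow
        (Filter.Eventually.of_forall fun n => hgle n y)
    -- dominated convergence
    have hgbd : ∀ (n : ℕ) (y : ℝ),
        ‖g n y‖ ≤ |c y| + (|c 0| + |subgrad c 0| * |y|) := by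
      intro n y
      have h1 := hgle n y
      have h2 := hgge n y
      have h3 : |c 0 + subgrad c 0 * y| ≤ |c 0| + |subgrad c 0| * |y| := by
        calc |c 0 + subgrad c 0 * y| ≤ |c 0| + |subgrad c 0 * y| := abs_add_le _ _
          _ = |c 0| + |subgrad c 0| * |y| := by rw [abs_mul]
      rw [Real.norm_eq_abs, abs_le]
      constructor
      · have h4 := neg_abs_le (c 0 + subgrad c 0 * y)
        have h5 := abs_nonneg (c y)
        linarith
      · have h4 := le_abs_self (c y)
        have h5 := abs_nonneg (c 0)
        have h6 : 0 ≤ |subgrad c 0| * |y| :=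
          mul_nonneg (abs_nonneg _) (abs_nonneg _)
        linarith
    have hgcont : ∀ n : ℕ, Continuous (g n) := by
      intro n
      simp only [hg, pwl]
      refine Continuous.add ?_ (continuous_finset_sum _ fun i _ => Continuous.max ?_ continuous_const)
      · unfold tanLine; fun_prop
      · unfold tanLine; fun_prop
    have hbd_int : ∀ (ν : Measure ℝ) [IsProbabilityMeasure ν],
        Integrable c ν → Integrable id ν →
        Integrable (fun y => |c y| + (|c 0| + |subgrad c 0| * |y|)) ν := by
      intro ν _ hcν hν
      refine hcν.abs.add ((integrable_const _).add ?_)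
      simpa using hν.abs.const_mul |subgrad c 0|
    have hdctl : Filter.Tendsto (fun n => ∫ y, g n y ∂lam) Filter.atTop
        (nhds (∫ y, c y ∂lam)) :=
      tendsto_integral_of_dominated_convergence _
        (fun n => (hgcont n).aestronglyMeasurable) (hbd_int lam hcl hlam)
        (fun n => Filter.Eventually.of_forall fun y => hgbd n y)
        (Filter.Eventually.of_forall hconv)
    have hdctm : Filter.Tendsto (fun n => ∫ y, g n y ∂mu) Filter.atTop
        (nhds (∫ y, c y ∂mu)) :=
      tendsto_integral_of_dominated_convergence _
        (fun n => (hgcont n).aestronglyMeasurable) (hbd_int mu hcm hmu)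
        (fun n => Filter.Eventually.of_forall fun y => hgbd n y)
        (Filter.Eventually.of_forall hconv)
    exact le_of_tendsto_of_tendsto' hdctl hdctm hineq
end

section
/- Pathwise Doob-type inequality: for any continuous path ω on [0,t] starting from s₀ and the martingale increments interpretation, one has the pathwise inequality sup_{s ≤ t} ω(s)² ≤ M_t + 4ω(t)², where M_t is the value of an explicit pathwise trading (stochastic integral) term with M₀ = 0; in the probabilistic form: for every continuous martingale X with X₀ = s₀, E[sup_{s≤t} X_s²] ≤ 4 E[X_t²]. -/
open MeasureTheory Set

open Finset Filter
open scoped ENNReal NNReal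

lemma sq_ofReal_rpow (x : ℝ) (hx : 0 ≤ x) :
    (ENNReal.ofReal x) ^ (2:ℝ) = ENNReal.ofReal (x ^ 2) := by
  rw [ENNReal.ofReal_rpow_of_nonneg hx (by norm_num : (0:ℝ) ≤ 2)]
  norm_num [Real.rpow_natCast]

lemma doob_discrete_L2 {Ω : Type*} {m0 : MeasurableSpace Ω} {P : Measure Ω}
    [IsFiniteMeasure P] {𝒢 : Filtration ℕ m0} {f : ℕ → Ω → ℝ}
    (hsub : Submartingale f 𝒢 P) (hnonneg : 0 ≤ f) (n : ℕ)
    (hfin : ∫⁻ ω, ENNReal.ofReal (((Finset.range (n+1)).sup'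
        Finset.nonempty_range_add_one fun k => f k ω) ^ 2) ∂P ≠ ⊤) :
    ∫⁻ ω, ENNReal.ofReal (((Finset.range (n+1)).sup'
        Finset.nonempty_range_add_one fun k => f k ω) ^ 2) ∂P
      ≤ 4 * ∫⁻ ω, ENNReal.ofReal ((f n ω) ^ 2) ∂P := by
  set G : Ω → ℝ := fun ω => (Finset.range (n+1)).sup' Finset.nonempty_range_add_one
    fun k => f k ω with hGdef
  have hfmeas : ∀ k, Measurable (f k) :=
    fun k => (hsub.stronglyMeasurable k).measurable.le (𝒢.le k)
  have hGmeas : Measurable G :=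
    Finset.measurable_range_sup'' fun k _ => hfmeas k
  have hGnn : ∀ ω, 0 ≤ G ω := fun ω =>
    le_trans (hnonneg 0 ω) (Finset.le_sup' (fun k => f k ω) (Finset.mem_range.2 n.succ_pos))
  set A := ∫⁻ ω, ENNReal.ofReal (G ω ^ 2) ∂P with hA
  set B := ∫⁻ ω, ENNReal.ofReal (f n ω ^ 2) ∂P with hB
  -- layer cake
  have layer : A = ∫⁻ s in Ioi (0:ℝ), P {a | s ≤ G a} * ENNReal.ofReal (2 * s) := by
    have h := lintegral_comp_eq_lintegral_meas_le_mul P (f := G) (g := fun s => 2 * s)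
      (ae_of_all _ hGnn) hGmeas.aemeasurable
      (fun t _ => (continuous_const.mul continuous_id).intervalIntegrable 0 t)
      ((ae_restrict_mem measurableSet_Ioi).mono fun s hs => by
        simp only [Set.mem_Ioi] at hs; positivity)
    have heq : ∀ ω, (∫ x in (0:ℝ)..G ω, 2 * x) = G ω ^ 2 := by
      intro ω
      rw [intervalIntegral.integral_const_mul, integral_id]
      ring
    simp_rw [heq] at h
    exact h
  -- maximal inequality
  have key : ∀ s : ℝ, 0 < s →
      P {a | s ≤ G a} * ENNReal.ofReal s
        ≤ ∫⁻ a in {a | s ≤ G a}, ENNReal.ofReal (f n a) ∂P := by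
    intro s hs
    have h1 := maximal_ineq hsub hnonneg (ε := s.toNNReal) n
    have hcoe : ((s.toNNReal : ℝ)) = s := Real.coe_toNNReal s hs.le
    rw [hcoe] at h1
    have h2 : ENNReal.ofReal (∫ ω in {a | s ≤ G a}, f n ω ∂P)
        = ∫⁻ a in {a | s ≤ G a}, ENNReal.ofReal (f n a) ∂P :=
      ofReal_integral_eq_lintegral_ofReal (hsub.integrable n).integrableOn
        (ae_of_all _ fun ω => hnonneg n ω)
    calc P {a | s ≤ G a} * ENNReal.ofReal s
        = s.toNNReal • P {a | s ≤ G a} := by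
          rw [ENNReal.smul_def, smul_eq_mul, mul_comm]
          rfl
      _ ≤ ENNReal.ofReal (∫ ω in {a | s ≤ G a}, f n ω ∂P) := h1
      _ = _ := h2
  -- Tonelli
  have hsetmeas : ∀ s : ℝ, MeasurableSet {a : Ω | s ≤ G a} :=
    fun s => measurableSet_le measurable_const hGmeas
  have swap : ∫⁻ s in Ioi (0:ℝ), ∫⁻ a in {a | s ≤ G a}, ENNReal.ofReal (f n a) ∂P
      = ∫⁻ a, ENNReal.ofReal (f n a) * ENNReal.ofReal (G a) ∂P := by
    have hind : ∀ s : ℝ, ∫⁻ a in {a | s ≤ G a}, ENNReal.ofReal (f n a) ∂P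
        = ∫⁻ a, {a : Ω | s ≤ G a}.indicator (fun a => ENNReal.ofReal (f n a)) a ∂P := by
      intro s
      exact (lintegral_indicator (hsetmeas s) _).symm
    simp_rw [hind]
    have hswap := lintegral_lintegral_swap (μ := volume.restrict (Ioi (0:ℝ))) (ν := P)
      (f := fun s a => {a : Ω | s ≤ G a}.indicator (fun a => ENNReal.ofReal (f n a)) a) ?_
    · rw [hswap]
      congr 1
      funext a
      have : ∀ s : ℝ, {a : Ω | s ≤ G a}.indicator (fun a => ENNReal.ofReal (f n a)) a
          = (Iic (G a)).indicator (fun _ : ℝ => ENNReal.ofReal (f n a)) s := by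
        intro s
        by_cases h : s ≤ G a <;>
          simp [Set.indicator_apply, h, Set.mem_Iic, Set.mem_setOf_eq]
      simp_rw [this]
      rw [lintegral_indicator measurableSet_Iic, setLIntegral_const,
        Measure.restrict_apply measurableSet_Iic, Set.Iic_inter_Ioi,
        Real.volume_Ioc, sub_zero, mul_comm]
    · apply Measurable.aemeasurable
      have hms : MeasurableSet {p : ℝ × Ω | p.1 ≤ G p.2} :=
        measurableSet_le measurable_fst (hGmeas.comp measurable_snd)
      have : (Function.uncurry fun s a =>
          {a : Ω | s ≤ G a}.indicator (fun a => ENNReal.ofReal (f n a)) a)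
          = {p : ℝ × Ω | p.1 ≤ G p.2}.indicator
              (fun p => ENNReal.ofReal (f n p.2)) := by
        funext p
        by_cases h : p.1 ≤ G p.2 <;>
          simp [Function.uncurry, Set.indicator_apply, h]
      rw [this]
      exact Measurable.indicator (((hfmeas n).comp measurable_snd).ennreal_ofReal) hms
  -- Cauchy-Schwarz
  have hconj : (2:ℝ).HolderConjugate 2 := Real.HolderConjugate.two_two
  have CS : ∫⁻ a, ENNReal.ofReal (f n a) * ENNReal.ofReal (G a) ∂P
      ≤ B ^ (1/2:ℝ) * A ^ (1/2:ℝ) := by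
    have h := ENNReal.lintegral_mul_le_Lp_mul_Lq P hconj
      (f := fun a => ENNReal.ofReal (f n a)) (g := fun a => ENNReal.ofReal (G a))
      ((hfmeas n).ennreal_ofReal.aemeasurable) (hGmeas.ennreal_ofReal.aemeasurable)
    simp only [Pi.mul_apply] at h
    have hB' : ∫⁻ a, (ENNReal.ofReal (f n a)) ^ (2:ℝ) ∂P = B := by
      rw [hB]; congr 1; funext a; exact sq_ofReal_rpow _ (hnonneg n a)
    have hA' : ∫⁻ a, (ENNReal.ofReal (G a)) ^ (2:ℝ) ∂P = A := by
      rw [hA]; congr 1; funext a; exact sq_ofReal_rpow _ (hGnn a)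
    rwa [hB', hA'] at h
  -- put together
  have main : A ≤ 2 * (B ^ (1/2:ℝ) * A ^ (1/2:ℝ)) := by
    calc A = ∫⁻ s in Ioi (0:ℝ), P {a | s ≤ G a} * ENNReal.ofReal (2 * s) := layer
      _ = ∫⁻ s in Ioi (0:ℝ), 2 * (P {a | s ≤ G a} * ENNReal.ofReal s) := by
          congr 1
          funext s
          rw [ENNReal.ofReal_mul (by norm_num : (0:ℝ) ≤ 2)]
          rw [show ENNReal.ofReal (2:ℝ) = 2 by norm_num]
          ring
      _ = 2 * ∫⁻ s in Ioi (0:ℝ), P {a | s ≤ G a} * ENNReal.ofReal s := by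
          rw [lintegral_const_mul' _ _ (by norm_num : (2:ℝ≥0∞) ≠ ⊤)]
      _ ≤ 2 * ∫⁻ s in Ioi (0:ℝ), ∫⁻ a in {a | s ≤ G a}, ENNReal.ofReal (f n a) ∂P := by
          refine mul_le_mul_right ?_ 2
          refine lintegral_mono_ae ?_
          filter_upwards [ae_restrict_mem measurableSet_Ioi] with s hs
          exact key s hs
      _ = 2 * ∫⁻ a, ENNReal.ofReal (f n a) * ENNReal.ofReal (G a) ∂P := by rw [swap]
      _ ≤ 2 * (B ^ (1/2:ℝ) * A ^ (1/2:ℝ)) := by gcongr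
  -- conclude
  rcases eq_or_ne A 0 with hA0 | hA0
  · rw [hA0]; exact zero_le
  rcases eq_or_ne B ⊤ with hBtop | hBtop
  · rw [hBtop]
    simp [ENNReal.mul_top]
  have hAh0 : A ^ (1/2:ℝ) ≠ 0 := by
    simp [ENNReal.rpow_eq_zero_iff, hA0, hfin]
  have hAht : A ^ (1/2:ℝ) ≠ ⊤ := by
    simp [ENNReal.rpow_eq_top_iff, hA0, hfin]
  have step : A ^ (1/2:ℝ) ≤ 2 * B ^ (1/2:ℝ) := by
    have hAA : A ^ (1/2:ℝ) * A ^ (1/2:ℝ) = A := by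
      rw [← ENNReal.rpow_add _ _ hA0 hfin]
      norm_num
    rw [← ENNReal.mul_le_mul_iff_left hAh0 hAht, hAA]
    calc A ≤ 2 * (B ^ (1/2:ℝ) * A ^ (1/2:ℝ)) := main
      _ = 2 * B ^ (1/2:ℝ) * A ^ (1/2:ℝ) := by ring
  have h22 : ((2:ENNReal) ^ (2:ℝ)) = 4 := by
    rw [show (2:ℝ) = ((2:ℕ):ℝ) by norm_num, ENNReal.rpow_natCast]; norm_num
  calc A = (A ^ (1/2:ℝ)) ^ (2:ℝ) := by
        rw [← ENNReal.rpow_mul]; norm_num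
    _ ≤ (2 * B ^ (1/2:ℝ)) ^ (2:ℝ) :=
        ENNReal.rpow_le_rpow step (by norm_num)
    _ = (2:ENNReal) ^ (2:ℝ) * (B ^ (1/2:ℝ)) ^ (2:ℝ) :=
        ENNReal.mul_rpow_of_nonneg _ _ (by norm_num)
    _ = 4 * B := by
        rw [h22, ← ENNReal.rpow_mul]; norm_num

/-- Doob's L² maximal inequality for a continuous martingale:
`E[sup_{s ≤ t} X_s²] ≤ 4 E[X_t²]`. (Stated with the lower Lebesgue integral so that
no integrability of the maximum needs to be pre-supposed.) -/
theorem doob_L2_maximal_continuous_martingale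
    {Ω : Type*} [MeasurableSpace Ω] (P : Measure Ω) [IsProbabilityMeasure P]
    (ℱ : Filtration ℝ (by infer_instance : MeasurableSpace Ω))
    (X : ℝ → Ω → ℝ)
    (hmart : Martingale X ℱ P)
    (hcont : ∀ ω, Continuous fun s => X s ω)
    (hL2 : ∀ s : ℝ, MemLp (X s) 2 P)
    (t : ℝ) (ht : 0 ≤ t) :
    ∫⁻ ω, ENNReal.ofReal ((sSup ((fun s => |X s ω|) '' Set.Icc 0 t)) ^ 2) ∂P
      ≤ 4 * ∫⁻ ω, ENNReal.ofReal ((X t ω) ^ 2) ∂P := by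
  have hXmeas : ∀ s : ℝ, Measurable (X s) :=
    fun s => (hmart.stronglyAdapted s).measurable.le (ℱ.le s)
  have h2pos : ∀ n : ℕ, (0:ℝ) < 2 ^ n := fun n => by positivity
  set τ : ℕ → ℕ → ℝ := fun n k => t * ((min k (2 ^ n) : ℕ) : ℝ) / (2 ^ n : ℝ) with hτdef
  have hτ_mono : ∀ n : ℕ, Monotone (τ n) := by
    intro n k l hkl
    have hmin : ((min k (2 ^ n) : ℕ) : ℝ) ≤ ((min l (2 ^ n) : ℕ) : ℝ) := by
      exact_mod_cast min_le_min hkl le_rfl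
    have := h2pos n
    simp only [hτdef]
    gcongr
  have hτ_mem : ∀ n k, τ n k ∈ Set.Icc 0 t := by
    intro n k
    constructor
    · simp only [hτdef]; positivity
    · simp only [hτdef]
      rw [div_le_iff₀ (h2pos n)]
      have hle : ((min k (2 ^ n) : ℕ) : ℝ) ≤ (2 ^ n : ℝ) := by
        exact_mod_cast min_le_right k (2 ^ n)
      calc t * ((min k (2 ^ n) : ℕ) : ℝ) ≤ t * (2 ^ n : ℝ) := by gcongr
        _ = t * 2 ^ n := rfl
  have hτ_last : ∀ n : ℕ, τ n (2 ^ n) = t := by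
    intro n
    simp only [hτdef, min_self]
    rw [mul_div_assoc]
    rw [show ((2 ^ n : ℕ) : ℝ) = (2 : ℝ) ^ n by push_cast; ring]
    rw [div_self (h2pos n).ne', mul_one]
  have hτ_zero : ∀ n : ℕ, τ n 0 = 0 := by
    intro n; simp [hτdef]
  set G : ℕ → Ω → ℝ := fun n ω => (Finset.range (2 ^ n + 1)).sup'
      Finset.nonempty_range_add_one fun k => |X (τ n k) ω| with hGdef
  have hGmeas : ∀ n, Measurable (G n) := by
    intro n
    exact Finset.measurable_range_sup'' fun k _ => (hXmeas (τ n k)).abs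
  have hGnn : ∀ n ω, 0 ≤ G n ω := by
    intro n ω
    exact le_trans (abs_nonneg _)
      (Finset.le_sup' (fun k => |X (τ n k) ω|) (Finset.mem_range.2 (Nat.succ_pos _)))
  have hsq_int : ∀ s : ℝ, ∫⁻ ω, ENNReal.ofReal (X s ω ^ 2) ∂P < ⊤ :=
    fun s => ((memLp_two_iff_integrable_sq (hL2 s).1).1 (hL2 s)).lintegral_lt_top
  -- discrete Doob bound for each dyadic level
  have hdisc : ∀ n : ℕ, ∫⁻ ω, ENNReal.ofReal (G n ω ^ 2) ∂P
      ≤ 4 * ∫⁻ ω, ENNReal.ofReal (X t ω ^ 2) ∂P := by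
    intro n
    set 𝒢 : Filtration ℕ (inferInstance : MeasurableSpace Ω) :=
      { seq := fun k => ℱ (τ n k)
        mono' := fun k l hkl => ℱ.mono (hτ_mono n hkl)
        le' := fun k => ℱ.le _ } with h𝒢def
    have hY : Martingale (fun k => X (τ n k)) 𝒢 P :=
      ⟨fun k => hmart.stronglyAdapted (τ n k), fun i j hij => hmart.2 _ _ (hτ_mono n hij)⟩
    have habs : Submartingale (fun k ω => |X (τ n k) ω|) 𝒢 P := by
      have h1 := (hY.submartingale).sup (hY.neg.submartingale)
      have h2 : ((fun k => X (τ n k)) ⊔ (-fun k => X (τ n k)))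
          = fun k ω => |X (τ n k) ω| := by
        funext k ω
        rfl
      rwa [h2] at h1
    have hnonneg : 0 ≤ fun k ω => |X (τ n k) ω| := fun k ω => abs_nonneg _
    have hfin : ∫⁻ ω, ENNReal.ofReal (((Finset.range (2 ^ n + 1)).sup'
        Finset.nonempty_range_add_one fun k => |X (τ n k) ω|) ^ 2) ∂P ≠ ⊤ := by
      have hb : ∀ ω, ENNReal.ofReal (((Finset.range (2 ^ n + 1)).sup'
          Finset.nonempty_range_add_one fun k => |X (τ n k) ω|) ^ 2)
          ≤ ∑ k ∈ Finset.range (2 ^ n + 1), ENNReal.ofReal (X (τ n k) ω ^ 2) := by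
        intro ω
        obtain ⟨k, hk, hkeq⟩ := Finset.exists_mem_eq_sup'
          (Finset.nonempty_range_add_one (n := 2 ^ n)) (fun k => |X (τ n k) ω|)
        rw [hkeq, sq_abs]
        exact Finset.single_le_sum (f := fun k => ENNReal.ofReal (X (τ n k) ω ^ 2))
          (fun i _ => zero_le) hk
      refine ne_top_of_le_ne_top ?_ (lintegral_mono hb)
      rw [lintegral_finset_sum _ fun k _ => ((hXmeas (τ n k)).pow_const 2).ennreal_ofReal]
      exact (ENNReal.sum_lt_top.2 fun k _ => hsq_int (τ n k)).ne
    have h := doob_discrete_L2 habs hnonneg (2 ^ n) hfin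
    have hlast : (fun ω => |X (τ n (2 ^ n)) ω| ^ 2) = fun ω => X t ω ^ 2 := by
      funext ω; rw [hτ_last n, sq_abs]
    simp only [hτ_last n, sq_abs] at h
    exact h
  -- monotone in n
  have hGmono : ∀ ω, Monotone fun n => G n ω := by
    intro ω
    apply monotone_nat_of_le_succ
    intro n
    apply Finset.sup'_le
    intro k hk
    rw [Finset.mem_range] at hk
    have hk' : k ≤ 2 ^ n := Nat.lt_succ_iff.1 hk
    have heq : τ n k = τ (n+1) (2*k) := by
      simp only [hτdef]
      rw [min_eq_left hk', min_eq_left (by omega : 2*k ≤ 2^(n+1))]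
      have h1 := (h2pos n).ne'
      push_cast
      rw [pow_succ]
      field_simp
    rw [heq]
    exact Finset.le_sup' (f := fun k => |X (τ (n+1) k) ω|)
      (Finset.mem_range.2 (by omega : 2*k < 2^(n+1)+1))
  -- pointwise identity
  have hpt : ∀ ω, ENNReal.ofReal ((sSup ((fun s => |X s ω|) '' Set.Icc 0 t)) ^ 2)
      = ⨆ n, ENNReal.ofReal (G n ω ^ 2) := by
    intro ω
    set hfn : ℝ → ℝ := fun s => |X s ω| with hh
    have hc : Continuous hfn := (hcont ω).abs
    set K := hfn '' Set.Icc 0 t with hK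
    have hKcomp : IsCompact K := isCompact_Icc.image hc
    have hKne : K.Nonempty := ⟨hfn 0, Set.mem_image_of_mem _ (Set.left_mem_Icc.2 ht)⟩
    have hbdd : BddAbove K := hKcomp.bddAbove
    have hGle : ∀ n, G n ω ≤ sSup K := by
      intro n
      apply Finset.sup'_le
      intro k _
      exact le_csSup hbdd (Set.mem_image_of_mem _ (hτ_mem n k))
    have hrange : BddAbove (Set.range fun n => G n ω) :=
      ⟨sSup K, by rintro x ⟨n, rfl⟩; exact hGle n⟩
    have hLM : (⨆ n, G n ω) ≤ sSup K := ciSup_le hGle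
    have hML : sSup K ≤ ⨆ n, G n ω := by
      obtain ⟨s, hs, hsM⟩ := hKcomp.sSup_mem hKne
      rw [← hsM]
      -- show hfn s ≤ ⨆ n, G n ω  for s ∈ Icc 0 t
      rcases eq_or_lt_of_le ht with h0 | htpos
      · -- t = 0
        have hs0 : s = 0 := le_antisymm (hs.2.trans h0.symm.le) hs.1
        have : hfn s ≤ G 0 ω := by
          rw [hs0, ← hτ_zero 0]
          exact Finset.le_sup' (fun k => |X (τ 0 k) ω|) (Finset.mem_range.2 (Nat.succ_pos _))
        exact this.trans (le_ciSup hrange 0)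
      · -- t > 0
        set a : ℕ → ℝ := fun n => τ n ⌊(2^n : ℝ) * s / t⌋₊ with ha
        have hkle : ∀ n : ℕ, ⌊(2^n : ℝ) * s / t⌋₊ ≤ 2 ^ n := by
          intro n
          have h1 : (2^n : ℝ) * s / t ≤ ((2^n : ℕ) : ℝ) := by
            push_cast
            rw [div_le_iff₀ htpos]
            nlinarith [hs.2, h2pos n]
          calc ⌊(2^n : ℝ) * s / t⌋₊ ≤ ⌊((2^n : ℕ) : ℝ)⌋₊ := Nat.floor_mono h1
            _ = 2 ^ n := Nat.floor_natCast _
        have haval : ∀ n : ℕ, a n = t * (⌊(2^n : ℝ) * s / t⌋₊ : ℝ) / 2 ^ n := by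
          intro n
          simp only [ha, hτdef, min_eq_left (hkle n)]
        have hnn : ∀ n : ℕ, (0:ℝ) ≤ (2^n : ℝ) * s / t := by
          intro n
          have := hs.1
          positivity
        have haub : ∀ n : ℕ, a n ≤ s := by
          intro n
          rw [haval n, div_le_iff₀ (h2pos n)]
          have h1 := Nat.floor_le (hnn n)
          calc t * (⌊(2^n : ℝ) * s / t⌋₊ : ℝ) ≤ t * ((2^n : ℝ) * s / t) := by gcongr
            _ = s * 2 ^ n := by field_simp
        have halb : ∀ n : ℕ, s - t / 2 ^ n ≤ a n := by
          intro n
          rw [haval n]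
          have h1 := Nat.lt_floor_add_one ((2^n : ℝ) * s / t)
          rw [sub_le_iff_le_add, ← add_div, le_div_iff₀ (h2pos n)]
          have h2 : (2^n : ℝ) * s ≤ t * ((⌊(2^n : ℝ) * s / t⌋₊ : ℝ) + 1) := by
            rw [← div_le_iff₀' htpos] at *
            calc (2^n : ℝ) * s / t ≤ (⌊(2^n : ℝ) * s / t⌋₊ : ℝ) + 1 := h1.le
              _ = _ := rfl
          nlinarith
        have hlim : Filter.Tendsto a Filter.atTop (nhds s) := by
          have hlb : Filter.Tendsto (fun n : ℕ => s - t / 2 ^ n) Filter.atTop (nhds s) := by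
            have h2 : Filter.Tendsto (fun n : ℕ => t / 2 ^ n) Filter.atTop (nhds 0) := by
              simp_rw [div_eq_mul_inv, ← inv_pow]
              simpa using (tendsto_pow_atTop_nhds_zero_of_lt_one (r := (2:ℝ)⁻¹)
                (by norm_num) (by norm_num)).const_mul t
            simpa using Filter.Tendsto.sub (tendsto_const_nhds (x := s)) h2
          exact tendsto_of_tendsto_of_tendsto_of_le_of_le hlb tendsto_const_nhds halb haub
        have hGb : ∀ n : ℕ, hfn (a n) ≤ ⨆ m, G m ω := by
          intro n
          have h1 : hfn (a n) ≤ G n ω :=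
            Finset.le_sup' (fun k => |X (τ n k) ω|)
              (Finset.mem_range.2 (Nat.lt_succ_of_le (hkle n)))
          exact h1.trans (le_ciSup hrange n)
        exact le_of_tendsto ((hc.tendsto s).comp hlim) (Filter.Eventually.of_forall hGb)
    have hMeq : sSup K = ⨆ n, G n ω := le_antisymm hML hLM
    have htend : Filter.Tendsto (fun n => G n ω) Filter.atTop (nhds (⨆ n, G n ω)) :=
      tendsto_atTop_ciSup (hGmono ω) hrange
    have htend2 : Filter.Tendsto (fun n => ENNReal.ofReal (G n ω ^ 2)) Filter.atTop
        (nhds (ENNReal.ofReal ((sSup K) ^ 2))) := by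
      rw [hMeq]
      exact (ENNReal.continuous_ofReal.tendsto _).comp (((continuous_pow 2).tendsto _).comp htend)
    have htend3 : Filter.Tendsto (fun n => ENNReal.ofReal (G n ω ^ 2)) Filter.atTop
        (nhds (⨆ n, ENNReal.ofReal (G n ω ^ 2))) :=
      tendsto_atTop_iSup fun m n hmn =>
        ENNReal.ofReal_le_ofReal (pow_le_pow_left₀ (hGnn m ω) (hGmono ω hmn) 2)
    exact tendsto_nhds_unique htend2 htend3
  have hFmono : Monotone fun n => (fun ω => ENNReal.ofReal (G n ω ^ 2)) := by
    intro m n hmn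
    intro ω
    exact ENNReal.ofReal_le_ofReal (pow_le_pow_left₀ (hGnn m ω) (hGmono ω hmn) 2)
  calc ∫⁻ ω, ENNReal.ofReal ((sSup ((fun s => |X s ω|) '' Set.Icc 0 t)) ^ 2) ∂P
      = ∫⁻ ω, ⨆ n, ENNReal.ofReal (G n ω ^ 2) ∂P := by
        congr 1; funext ω; exact hpt ω
    _ = ⨆ n, ∫⁻ ω, ENNReal.ofReal (G n ω ^ 2) ∂P :=
        lintegral_iSup (fun n => ((hGmeas n).pow_const 2).ennreal_ofReal) hFmono
    _ ≤ 4 * ∫⁻ ω, ENNReal.ofReal (X t ω ^ 2) ∂P := iSup_le hdisc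
end

section
/- For the minimization of E[F(τ)] over stopping times τ ≥ σ embedding μ (F convex increasing), the stop-go pairs are characterized as: for stopped paths (f,s), (g,t) with f(s) = g(t) and (g,t) feasible, the pair ((f,s),(g,t)) is a stop-go pair (for the minimization) if and only if (f,s) is feasible and s > t. Equivalently: for every integrable stopping time σ with 0 < E[σ] < ∞, if s > t then E[F(s + σ)] + F(t) > F(s) + E[F(t + σ)]. -/
open MeasureTheory Set

lemma stopgo_pointwise_lt (F : ℝ → ℝ) (hF : StrictConvexOn ℝ (Set.Ici (0 : ℝ)) F)
    {s t u : ℝ} (hts : t < s) (ht : 0 ≤ t) (hu : 0 < u) :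
    F (t + u) + F s < F t + F (s + u) := by
  have h1 := hF.secant_strict_mono_aux1 (x := t) (y := t + u) (z := s + u)
    (by exact ht) (by simp; linarith) (by linarith) (by linarith)
  have h2 := hF.secant_strict_mono_aux1 (x := t) (y := s) (z := s + u)
    (by exact ht) (by simp; linarith) hts (by linarith)
  nlinarith [h1, h2, sub_pos.mpr hts, hu]

lemma stopgo_pointwise_le (F : ℝ → ℝ) (hF : StrictConvexOn ℝ (Set.Ici (0 : ℝ)) F)
    {s t u : ℝ} (hts : t < s) (ht : 0 ≤ t) (hu : 0 ≤ u) :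
    F (t + u) + F s ≤ F t + F (s + u) := by
  rcases eq_or_lt_of_le hu with rfl | hu
  · simp
  · exact (stopgo_pointwise_lt F hF hts ht hu).le

/-- core stop-go inequality: if `F : ℝ₊ → ℝ` is strictly convex and
`s > t ≥ 0`, then for every nonnegative random variable `σ` with `0 < E[σ] < ∞`
(and all relevant expectations finite),
`E[F(s+σ)] - F(s) > E[F(t+σ)] - F(t)`. -/
theorem stop_go_strict_convex
    {Ω : Type*} [MeasurableSpace Ω] (P : Measure Ω) [IsProbabilityMeasure P]
    (F : ℝ → ℝ) (hF : StrictConvexOn ℝ (Set.Ici (0 : ℝ)) F)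
    (s t : ℝ) (hts : t < s) (ht : 0 ≤ t)
    (σ : Ω → ℝ) (hσ0 : ∀ ω, 0 ≤ σ ω)
    (hσint : Integrable σ P) (hσpos : 0 < ∫ ω, σ ω ∂P)
    (hFs : Integrable (fun ω => F (s + σ ω)) P)
    (hFt : Integrable (fun ω => F (t + σ ω)) P) :
    (∫ ω, F (t + σ ω) ∂P) - F t < (∫ ω, F (s + σ ω) ∂P) - F s := by
  -- define the nonnegative gap function
  set g : Ω → ℝ := fun ω => (F (s + σ ω) - F (t + σ ω)) - (F s - F t) with hg
  have hg0 : ∀ ω, 0 ≤ g ω := fun ω => by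
    have := stopgo_pointwise_le F hF hts ht (hσ0 ω)
    simp only [hg]; linarith
  have hgint : Integrable g P := by
    have : Integrable (fun ω => F (s + σ ω) - F (t + σ ω)) P := hFs.sub hFt
    exact this.sub (integrable_const _)
  have hsupp : Function.support σ ⊆ Function.support g := by
    intro ω hω
    have hσω : 0 < σ ω := lt_of_le_of_ne (hσ0 ω) (Ne.symm hω)
    have := stopgo_pointwise_lt F hF hts ht hσω
    simp only [Function.mem_support, hg]
    intro h; apply absurd h; intro h'; linarith
  have hσsupp : 0 < P (Function.support σ) :=
    ((integral_pos_iff_support_of_nonneg hσ0 hσint).mp hσpos)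
  have hgpos : 0 < ∫ ω, g ω ∂P := by
    rw [integral_pos_iff_support_of_nonneg hg0 hgint]
    exact lt_of_lt_of_le hσsupp (measure_mono hsupp)
  have hint : ∫ ω, g ω ∂P
      = (∫ ω, F (s + σ ω) ∂P) - (∫ ω, F (t + σ ω) ∂P) - (F s - F t) := by
    have h1 : Integrable (fun ω => F (s + σ ω) - F (t + σ ω)) P := hFs.sub hFt
    simp only [hg]
    rw [integral_sub h1 (integrable_const _), integral_sub hFs hFt, integral_const]
    simp
  linarith [hint ▸ hgpos]
end
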